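/- Let 𝒫 be a partial clustering, let (P_i)_{i∈[k]} be an optimal extension of 𝒫 with associated centers (c'_i), and let C > 0. Suppose there exist indices i, j ∈ [k] and a set I' ⊆ I_i such that I_j = ∅, |I'| ≥ d − Δ, and f^{I'}_2(P_j, u_i) − f^{I'}_2(P_j, c'_j) ≤ C·f_2(P_i, u_i). Then the tuple 𝒫' obtained from 𝒫 by setting I_j := I', u_j := the element of ℍ^d equal to u_i on the coordinates of I' and to ? elsewhere, and n_j := 1 is a partial clustering with OPT(𝒫') ≤ (1 + C)·OPT(𝒫). -/
import Mathlib


open Finset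

namespace KMD

/-- A point in `ℍ^d`: each coordinate is either a real number or missing (`none`). -/
abbrev HPt (d : ℕ) := Fin d → Option ℝ

variable {d : ℕ}

/-- The domain of a point: the set of coordinates where it is specified. -/
noncomputable def Dom (x : HPt d) : Finset (Fin d) := Finset.univ.filter fun i => x i ≠ none

/-- The number of missing coordinates of a point. -/
noncomputable def numMissing (x : HPt d) : ℕ := (Finset.univ.filter fun i => x i = none).card

/-- A `Δ`-point: at most `Δ` coordinates are missing. -/
def IsDeltaPt (Δ : ℕ) (x : HPt d) : Prop := numMissing x ≤ Δ

/-- `(a - b)^2`, with the convention that it is `0` when either entry is missing. -/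
def coordSq : Option ℝ → Option ℝ → ℝ
  | some a, some b => (a - b) ^ 2
  | _, _ => 0

/-- `d^I(x,y)`. -/
noncomputable def dI (I : Finset (Fin d)) (x y : HPt d) : ℝ :=
  Real.sqrt (∑ i ∈ I, coordSq (x i) (y i))

/-- `d(x,y) = d^{[d]}(x,y)`. -/
noncomputable def dH (x y : HPt d) : ℝ := dI Finset.univ x y

/-- `PD(S, I)`: points of `S` partially defined on `I`. -/
noncomputable def PD (S : Finset (HPt d)) (I : Finset (Fin d)) : Finset (HPt d) :=
  S.filter fun x => (Dom x ∩ I).Nonempty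

/-- `FD(S, I)`: points of `S` fully defined on `I`. -/
noncomputable def FD (S : Finset (HPt d)) (I : Finset (Fin d)) : Finset (HPt d) :=
  S.filter fun x => Dom x ⊆ I

/-- The mean `c^I(P)` of `P` on the coordinates of `I` (unspecified outside `I`). -/
noncomputable def cI (I : Finset (Fin d)) (P : Finset (HPt d)) : HPt d := fun i =>
  if i ∈ I ∧ (PD P {i}).Nonempty then
    some ((∑ x ∈ PD P {i}, (x i).getD 0) / (PD P {i}).card)
  else none

/-- `c(P) = c^{[d]}(P)`. -/
noncomputable def cP (P : Finset (HPt d)) : HPt d := cI Finset.univ P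

/-- `f^I_2(X, y) = Σ_{x ∈ X} d^I(x,y)^2`. -/
noncomputable def f2I (I : Finset (Fin d)) (X : Finset (HPt d)) (y : HPt d) : ℝ :=
  ∑ x ∈ X, dI I x y ^ 2

/-- `f_2 = f^{[d]}_2`. -/
noncomputable def f2 (X : Finset (HPt d)) (y : HPt d) : ℝ := f2I Finset.univ X y

/-- A partial clustering of the instance `P` of `Δ`-points, with `k` clusters. -/
structure PartialClustering (d Δ k : ℕ) (P : Finset (HPt d)) where
  n : Fin k → ℕ
  H : Fin k → Finset (HPt d)
  I : Fin k → Finset (Fin d)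
  u : Fin k → HPt d
  H_sub : ∀ i, H i ⊆ P
  n_le : ∀ i, n i ≤ Δ + 1
  dom_u : ∀ i, Dom (u i) = I i
  I_card : ∀ i, 0 < n i → d - Δ + (n i - 1) ≤ (I i).card
  I_empty : ∀ i, n i = 0 → I i = ∅
  H_empty : ∀ i, n i = 0 → H i = ∅

variable {Δ k : ℕ} {P : Finset (HPt d)}

/-- `R = P − ∪_i H_i`: the points not yet assigned to a cluster. -/
noncomputable def Rset (pc : PartialClustering d Δ k P) : Finset (HPt d) :=
  P \ Finset.univ.biUnion pc.H

/-- An extension of a partial clustering: a partition `(Q i)` of `P` with `H i ⊆ Q i`. -/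
def IsExtension (pc : PartialClustering d Δ k P) (Q : Fin k → Finset (HPt d)) : Prop :=
  (∀ i, pc.H i ⊆ Q i) ∧ (∀ i, Q i ⊆ P) ∧
    (∀ i j, i ≠ j → Disjoint (Q i) (Q j)) ∧ ∀ x ∈ P, ∃ i, x ∈ Q i

/-- The centers associated with an extension: `c'_i` agrees with `u i` on `I i`
and with the mean of `Q i` outside `I i`. -/
noncomputable def centers (pc : PartialClustering d Δ k P)
    (Q : Fin k → Finset (HPt d)) (i : Fin k) : HPt d :=
  fun r => if r ∈ pc.I i then pc.u i r else cP (Q i) r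

/-- The value of an extension. -/
noncomputable def extVal (pc : PartialClustering d Δ k P)
    (Q : Fin k → Finset (HPt d)) : ℝ :=
  ∑ i, f2 (Q i) (centers pc Q i)

/-- `OPT(pc)`: the minimum value over all extensions of `pc`. -/
noncomputable def OPT (pc : PartialClustering d Δ k P) : ℝ :=
  sInf (extVal pc '' {Q | IsExtension pc Q})

/-- An optimal extension. -/
def IsOptimalExtension (pc : PartialClustering d Δ k P)
    (Q : Fin k → Finset (HPt d)) : Prop :=
  IsExtension pc Q ∧ ∀ Q', IsExtension pc Q' → extVal pc Q ≤ extVal pc Q'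

/-- A safe extension. -/
def IsSafe (pc : PartialClustering d Δ k P) (Q : Fin k → Finset (HPt d)) : Prop :=
  ∀ x ∈ Rset pc, ∀ i j : Fin k, Dom x ⊆ pc.I i → Dom x ⊆ pc.I j → x ∈ Q i →
    dH x (centers pc Q i) ≤ dH x (centers pc Q j)

/-- `Z` is a `t`-useless set of coordinates for the pair `(i,j)` and extension `Q`.
For pairs with `I i = ∅` or `I j ≠ ∅` it is by definition the empty set. -/
def IsUseless (pc : PartialClustering d Δ k P) (Q : Fin k → Finset (HPt d))
    (t : ℝ) (i j : Fin k) (Z : Finset (Fin d)) : Prop :=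
  Z ⊆ pc.I i ∧
  (((pc.I i).Nonempty ∧ pc.I j = ∅) →
    (Z = ∅ ∨ d - Δ ≤ Z.card) ∧
    f2I Z (Q j ∩ Rset pc) (pc.u i) - f2I Z (Q j ∩ Rset pc) (centers pc Q j)
      ≤ t * OPT pc) ∧
  (¬ ((pc.I i).Nonempty ∧ pc.I j = ∅) → Z = ∅)

/-- `Z` is compatible with the extension `Q` (for the pair `(i,j)`). -/
def Compatible (pc : PartialClustering d Δ k P) (Q : Fin k → Finset (HPt d))
    (i j : Fin k) (Z : Finset (Fin d)) : Prop :=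
  (∀ x ∈ Q j, ¬ Dom x ⊆ pc.I j → ¬ Dom x ⊆ Z) ∧
  (∀ x ∈ Q j, Dom x ⊆ pc.I i → ¬ dH x (pc.u i) < dH x (centers pc Q j) / 2)

open scoped Classical in
/-- The elements of `FD(S, I)` at distance at most `ρ` from `u`. -/
noncomputable def ballFD (S : Finset (HPt d)) (I : Finset (Fin d))
    (u : HPt d) (ρ : ℝ) : Finset (HPt d) :=
  (FD S I).filter fun x => dH x u ≤ ρ


lemma coordSq_nonneg (a b : Option ℝ) : 0 ≤ coordSq a b := by
  cases a <;> cases b <;> simp [coordSq] <;> positivity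

lemma coordSq_none_right (a : Option ℝ) : coordSq a none = 0 := by cases a <;> rfl

lemma dI_sq (I : Finset (Fin d)) (x y : HPt d) :
    dI I x y ^ 2 = ∑ r ∈ I, coordSq (x r) (y r) :=
  Real.sq_sqrt (Finset.sum_nonneg fun r _ => coordSq_nonneg _ _)

lemma f2I_eq (I : Finset (Fin d)) (X : Finset (HPt d)) (y : HPt d) :
    f2I I X y = ∑ x ∈ X, ∑ r ∈ I, coordSq (x r) (y r) :=
  Finset.sum_congr rfl fun x _ => dI_sq I x y

lemma f2_nonneg (X : Finset (HPt d)) (y : HPt d) : 0 ≤ f2 X y := by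
  rw [f2, f2I_eq]
  exact Finset.sum_nonneg fun x _ =>
    Finset.sum_nonneg fun r _ => coordSq_nonneg _ _

lemma extVal_nonneg {Δ k : ℕ} {P : Finset (HPt d)} (pc : PartialClustering d Δ k P)
    (Q : Fin k → Finset (HPt d)) : 0 ≤ extVal pc Q :=
  Finset.sum_nonneg fun l _ => f2_nonneg _ _

/-- Lemma 6: transferring `u_i` restricted to `I'` as a new partial
center for cluster `j` yields a partial clustering of value at most `(1+C)·OPT`. -/
theorem stmt_7 {d Δ k : ℕ} (hd : 1 ≤ d) (hΔ : Δ < d) (hk : 1 ≤ k)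
    {P : Finset (HPt d)} (hP : ∀ y ∈ P, IsDeltaPt Δ y ∧ (Dom y).Nonempty)
    (pc : PartialClustering d Δ k P)
    (Q : Fin k → Finset (HPt d)) (hQ : IsOptimalExtension pc Q)
    (C : ℝ) (hC : 0 < C) (i j : Fin k)
    (I' : Finset (Fin d)) (hI'sub : I' ⊆ pc.I i) (hIj : pc.I j = ∅)
    (hI'card : d - Δ ≤ I'.card)
    (hcost : f2I I' (Q j) (pc.u i) - f2I I' (Q j) (centers pc Q j)
      ≤ C * f2 (Q i) (pc.u i)) :
    ∃ pc' : PartialClustering d Δ k P,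
      pc'.H = pc.H ∧
      pc'.n = Function.update pc.n j 1 ∧
      pc'.I = Function.update pc.I j I' ∧
      pc'.u = Function.update pc.u j (fun r => if r ∈ I' then pc.u i r else none) ∧
      OPT pc' ≤ (1 + C) * OPT pc := by
  classical
  set u' : HPt d := fun r => if r ∈ I' then pc.u i r else none with hu'
  have hu'dom : Dom u' = I' := by
    ext r
    simp only [Dom, mem_filter, mem_univ, true_and, hu']
    by_cases hr : r ∈ I'
    · have hrd : r ∈ Dom (pc.u i) := (pc.dom_u i).symm ▸ hI'sub hr
      have : pc.u i r ≠ none := (mem_filter.mp hrd).2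
      simp [hr, this]
    · simp [hr]
  set pc' : PartialClustering d Δ k P :=
    { n := Function.update pc.n j 1
      H := pc.H
      I := Function.update pc.I j I'
      u := Function.update pc.u j u'
      H_sub := pc.H_sub
      n_le := by
        intro l
        rcases eq_or_ne l j with rfl | hl
        · simp
        · simpa [Function.update_of_ne hl] using pc.n_le l
      dom_u := by
        intro l
        rcases eq_or_ne l j with rfl | hl
        · simpa using hu'dom
        · simpa [Function.update_of_ne hl] using pc.dom_u l
      I_card := by
        intro l hl
        rcases eq_or_ne l j with rfl | hne
        · simpa using hI'card
        · simp only [Function.update_of_ne hne] at hl ⊢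
          exact pc.I_card l hl
      I_empty := by
        intro l hl
        rcases eq_or_ne l j with rfl | hne
        · simp at hl
        · simp only [Function.update_of_ne hne] at hl ⊢
          exact pc.I_empty l hl
      H_empty := by
        intro l hl
        rcases eq_or_ne l j with rfl | hne
        · simp at hl
        · simp only [Function.update_of_ne hne] at hl
          exact pc.H_empty l hl } with hpc'
  refine ⟨pc', rfl, rfl, rfl, rfl, ?_⟩
  have hext' : IsExtension pc' Q := hQ.1
  have hbdd : ∀ (p : PartialClustering d Δ k P),
      BddBelow (extVal p '' {Q | IsExtension p Q}) := by
    intro p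
    refine ⟨0, ?_⟩
    rintro v ⟨Q', -, rfl⟩
    exact extVal_nonneg _ _
  have hOPT : OPT pc = extVal pc Q :=
    le_antisymm (csInf_le (hbdd pc) ⟨Q, hQ.1, rfl⟩)
      (le_csInf ⟨_, ⟨Q, hQ.1, rfl⟩⟩ (by rintro v ⟨Q', hQ', rfl⟩; exact hQ.2 Q' hQ'))
  have hOPT' : OPT pc' ≤ extVal pc' Q := csInf_le (hbdd pc') ⟨Q, hext', rfl⟩
  -- centers for clusters other than j are unchanged
  have hcenters_ne : ∀ l, l ≠ j → centers pc' Q l = centers pc Q l := by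
    intro l hl
    funext r
    simp [centers, hpc', Function.update_of_ne hl]
  have hcj : centers pc Q j = cP (Q j) := by
    funext r; simp [centers, hIj]
  have hcj' : ∀ r, centers pc' Q j r = if r ∈ I' then pc.u i r else cP (Q j) r := by
    intro r
    by_cases hr : r ∈ I' <;> simp [centers, hpc', hu', hr]
  -- change in the value of cluster j
  have hjterm : f2 (Q j) (centers pc' Q j)
      = f2 (Q j) (centers pc Q j)
        + (f2I I' (Q j) (pc.u i) - f2I I' (Q j) (centers pc Q j)) := by
    rw [f2, f2, f2I_eq, f2I_eq, f2I_eq, f2I_eq]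
    have key : ∀ x ∈ Q j, ∑ r, coordSq (x r) (centers pc' Q j r)
        = ∑ r, coordSq (x r) (centers pc Q j r)
          + (∑ r ∈ I', coordSq (x r) (pc.u i r)
            - ∑ r ∈ I', coordSq (x r) (centers pc Q j r)) := by
      intro x hx
      have h1 := (Finset.sum_add_sum_compl I'
        (fun r => coordSq (x r) (centers pc' Q j r))).symm
      have h2 := (Finset.sum_add_sum_compl I'
        (fun r => coordSq (x r) (centers pc Q j r))).symm
      have e1 : ∑ r ∈ I', coordSq (x r) (centers pc' Q j r)
          = ∑ r ∈ I', coordSq (x r) (pc.u i r) :=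
        Finset.sum_congr rfl fun r hr => by rw [hcj' r, if_pos hr]
      have e2 : ∑ r ∈ I'ᶜ, coordSq (x r) (centers pc' Q j r)
          = ∑ r ∈ I'ᶜ, coordSq (x r) (centers pc Q j r) :=
        Finset.sum_congr rfl fun r hr => by
          rw [hcj' r, if_neg (Finset.mem_compl.mp hr), hcj]
      rw [h1, h2, e1, e2]; ring
    calc ∑ x ∈ Q j, ∑ r, coordSq (x r) (centers pc' Q j r)
        = ∑ x ∈ Q j, (∑ r, coordSq (x r) (centers pc Q j r)
            + (∑ r ∈ I', coordSq (x r) (pc.u i r)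
              - ∑ r ∈ I', coordSq (x r) (centers pc Q j r))) :=
          Finset.sum_congr rfl key
      _ = _ := by
          rw [Finset.sum_add_distrib, Finset.sum_sub_distrib]
  have hsum' : extVal pc' Q = extVal pc Q
      + (f2I I' (Q j) (pc.u i) - f2I I' (Q j) (centers pc Q j)) := by
    unfold extVal
    rw [← Finset.sum_erase_add Finset.univ _ (Finset.mem_univ j),
        ← Finset.sum_erase_add Finset.univ
          (fun l => f2 (Q l) (centers pc Q l)) (Finset.mem_univ j)]
    have herase : ∑ l ∈ Finset.univ.erase j, f2 (Q l) (centers pc' Q l)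
        = ∑ l ∈ Finset.univ.erase j, f2 (Q l) (centers pc Q l) :=
      Finset.sum_congr rfl fun l hl => by
        rw [hcenters_ne l (Finset.mem_erase.mp hl).1]
    rw [herase, hjterm]; ring
  have hui : f2 (Q i) (pc.u i) ≤ f2 (Q i) (centers pc Q i) := by
    rw [f2, f2, f2I_eq, f2I_eq]
    refine Finset.sum_le_sum fun x hx => Finset.sum_le_sum fun r hr => ?_
    by_cases h : r ∈ pc.I i
    · simp [centers, h]
    · have hnone : pc.u i r = none := by
        by_contra hne
        exact h ((pc.dom_u i) ▸ mem_filter.mpr ⟨mem_univ r, hne⟩)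
      rw [hnone, coordSq_none_right]
      exact coordSq_nonneg _ _
  have hle : f2 (Q i) (centers pc Q i) ≤ extVal pc Q :=
    Finset.single_le_sum (fun l _ => f2_nonneg _ _) (Finset.mem_univ i)
  have hmul : C * f2 (Q i) (pc.u i) ≤ C * extVal pc Q :=
    mul_le_mul_of_nonneg_left (hui.trans hle) hC.le
  calc OPT pc' ≤ extVal pc' Q := hOPT'
    _ = extVal pc Q + (f2I I' (Q j) (pc.u i) - f2I I' (Q j) (centers pc Q j)) := hsum'
    _ ≤ extVal pc Q + C * f2 (Q i) (pc.u i) := by linarith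
    _ ≤ extVal pc Q + C * extVal pc Q := by linarith
    _ = (1 + C) * extVal pc Q := by ring
    _ = (1 + C) * OPT pc := by rw [hOPT]

end KMD
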